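/- arXiv:2105.04728 — 7 statements merged into one kernel-verified Lean document; each statement's English description precedes it below -/
import Mathlib

section
/- Let d ∈ ℝ^T be a demand profile, let (Ω, μ) be a probability space, and let δ : Ω → ℝ^T be a Bochner-integrable map such that δ(ω) is a feasible discharging vector for d for μ-almost every ω. Then the averaged vector δ̄ = ∫_Ω δ(ω) dμ(ω) is a feasible discharging vector for d, and R(d, δ̄) ≥ ∫_Ω R(d, δ(ω)) dμ(ω). (Consequently, no randomized algorithm can outperform the deterministic algorithm obtained by averaging its actions.) -/
open Finset MeasureTheory

noncomputable section

/-- A discharging vector `δ` is feasible for demand profile `d` (with capacity `c`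
and per-slot limit `dmax`). -/
def Feasible {T : ℕ} (c dmax : ℝ) (d δ : Fin T → ℝ) : Prop :=
  (∑ t, δ t) ≤ c ∧ ∀ t, 0 ≤ δ t ∧ δ t ≤ min dmax (d t)

/-- Peak-demand reduction `R(d, δ)`. -/
noncomputable def Red {T : ℕ} (d δ : Fin T → ℝ) : ℝ :=
  (⨆ t, d t) - ⨆ t, (d t - δ t)

/-- Offline optimal peak-demand reduction `σ(d)`. -/
noncomputable def offOpt {T : ℕ} (c dmax : ℝ) (d : Fin T → ℝ) : ℝ :=
  sSup {r | ∃ δ : Fin T → ℝ, Feasible c dmax d δ ∧ r = Red d δ}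

/-- Prefix maximum `max_{k ∈ [t]} d_k`. -/
noncomputable def prefMax {T : ℕ} (d : Fin T → ℝ) (t : Fin T) : ℝ :=
  ⨆ k : {k : Fin T // k ≤ t}, d k.1

/-- The uncertainty set `D`: all profiles with entries in `[dlo, dhi]`. -/
def inD {T : ℕ} (dlo dhi : ℝ) (d : Fin T → ℝ) : Prop :=
  ∀ t, dlo ≤ d t ∧ d t ≤ dhi

/-- Reference profile `d^t`: observed demands up to slot `t`, lowest demand `dlo` afterwards. -/
def ref {T : ℕ} (dlo : ℝ) (d : Fin T → ℝ) (t : Fin T) : Fin T → ℝ :=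
  fun k => if k ≤ t then d k else dlo

/-- Output of `pCR-PRM(π)` at slot `t`:
`δ_t(π, d) = [d_t − max_{k∈[t]} d_k + σ(d^t)/π]⁺`. -/
noncomputable def pcr {T : ℕ} (c dmax dlo : ℝ) (π : ℝ) (d : Fin T → ℝ) (t : Fin T) : ℝ :=
  max (d t - prefMax d t + offOpt c dmax (ref dlo d t) / π) 0

/-- Inventory function `Φ(π) = sup_{d ∈ D} ∑_t δ_t(π, d)`. -/
noncomputable def Phi (T : ℕ) (c dmax dlo dhi : ℝ) (π : ℝ) : ℝ :=
  sSup {s | ∃ d : Fin T → ℝ, inD dlo dhi d ∧ s = ∑ t, pcr c dmax dlo π d t}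

/-- averaging the actions of an (almost-everywhere) feasible randomized
strategy yields a feasible discharging vector whose peak reduction is at least the
expected peak reduction of the randomized strategy. -/
theorem stmt3 (T : ℕ) (hT : 0 < T) (c dmax : ℝ) (hc : 0 < c) (hdmax : 0 < dmax)
    (d : Fin T → ℝ) (hd : ∀ t, 0 < d t)
    {Ω : Type*} [MeasurableSpace Ω] (μ : Measure Ω) [IsProbabilityMeasure μ]
    (δ : Ω → Fin T → ℝ) (hint : Integrable δ μ)
    (hfeas : ∀ᵐ ω ∂μ, Feasible c dmax d (δ ω)) :
    Feasible c dmax d (∫ ω, δ ω ∂μ) ∧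
      (∫ ω, Red d (δ ω) ∂μ) ≤ Red d (∫ ω, δ ω ∂μ) := by
  haveI : Nonempty (Fin T) := Fin.pos_iff_nonempty.mp hT
  -- component integrability and integral
  have hcomp : ∀ t : Fin T, Integrable (fun ω => δ ω t) μ := fun t =>
    (ContinuousLinearMap.proj (R := ℝ) (φ := fun _ : Fin T => ℝ) t).integrable_comp hint
  have hval : ∀ t : Fin T, (∫ ω, δ ω ∂μ) t = ∫ ω, δ ω t ∂μ := fun t => by
    exact ((ContinuousLinearMap.proj (R := ℝ) (φ := fun _ : Fin T => ℝ) t).integral_comp_comm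
      hint).symm
  have hfeasInt : Feasible c dmax d (∫ ω, δ ω ∂μ) := by
    constructor
    · have h1 : ∑ t, (∫ ω, δ ω ∂μ) t = ∫ ω, ∑ t, δ ω t ∂μ := by
        rw [integral_finset_sum _ (fun t _ => hcomp t)]
        exact Finset.sum_congr rfl fun t _ => hval t
      rw [h1]
      calc ∫ ω, ∑ t, δ ω t ∂μ ≤ ∫ _, c ∂μ := by
            refine integral_mono_ae (integrable_finset_sum _ fun t _ => hcomp t)
              (integrable_const c) ?_
            filter_upwards [hfeas] with ω hω using hω.1
        _ = c := by simp
    · intro t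
      constructor
      · rw [hval t]
        refine integral_nonneg_of_ae ?_
        filter_upwards [hfeas] with ω hω using (hω.2 t).1
      · rw [hval t]
        calc ∫ ω, δ ω t ∂μ ≤ ∫ _, min dmax (d t) ∂μ := by
              refine integral_mono_ae (hcomp t) (integrable_const _) ?_
              filter_upwards [hfeas] with ω hω using (hω.2 t).2
          _ = min dmax (d t) := by simp
  refine ⟨hfeasInt, ?_⟩
  set S := ⨆ t, d t with hS
  have hbdd : ∀ f : Fin T → ℝ, BddAbove (Set.range f) := fun f => (Set.finite_range f).bddAbove
  have hdS : ∀ t, d t ≤ S := fun t => le_ciSup (hbdd d) t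
  -- pick t₀ maximizing d t - δ̄ t
  obtain ⟨t₀, ht₀⟩ := Finite.exists_max (fun t => d t - (∫ ω, δ ω ∂μ) t)
  have hsup : (⨆ t, (d t - (∫ ω, δ ω ∂μ) t)) = d t₀ - (∫ ω, δ ω ∂μ) t₀ :=
    le_antisymm (ciSup_le ht₀) (le_ciSup (f := fun t => d t - (∫ ω, δ ω ∂μ) t) (hbdd _) t₀)
  have hRed : Red d (∫ ω, δ ω ∂μ) = S - d t₀ + (∫ ω, δ ω ∂μ) t₀ := by
    rw [Red, hsup]; ring
  rw [hRed, hval t₀]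
  have hRHSint : Integrable (fun ω => S - d t₀ + δ ω t₀) μ :=
    (integrable_const (S - d t₀)).add (hcomp t₀)
  calc (∫ ω, Red d (δ ω) ∂μ) ≤ ∫ ω, (S - d t₀ + δ ω t₀) ∂μ := by
        refine integral_mono_of_nonneg ?_ hRHSint ?_
        · filter_upwards [hfeas] with ω hω
          have hle : (⨆ t, (d t - δ ω t)) ≤ S :=
            ciSup_le fun t => le_trans (by linarith [(hω.2 t).1]) (hdS t)
          simpa [Red] using hle
        · filter_upwards [hfeas] with ω _
          have : d t₀ - δ ω t₀ ≤ ⨆ t, (d t - δ ω t) := le_ciSup (f := fun t => d t - δ ω t) (hbdd _) t₀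
          simp only [Red]; linarith
    _ = S - d t₀ + ∫ ω, δ ω t₀ ∂μ := by
        rw [integral_add (integrable_const _) (hcomp t₀)]; simp
end
end

section
/- For every π ≥ 1, every d ∈ D, and every t ∈ [T], the output of pCR-PRM(π) satisfies 0 ≤ δ_t(π,d) ≤ min(dmax, d_t); that is, the outputs of pCR-PRM(π) always satisfy the nonnegativity, per-slot demand, and discharging-rate constraints. -/
open Finset MeasureTheory

noncomputable section

/-- for `π ≥ 1`, `d ∈ D`, `t ∈ [T]`, we have `0 ≤ δ_t(π,d) ≤ min(dmax, d_t)`. -/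
theorem stmt6 (T : ℕ) (hT : 0 < T) (c dmax dlo dhi : ℝ)
    (hc : 0 < c) (hdmax : 0 < dmax) (hdlo : 0 < dlo) (hbd : dlo ≤ dhi)
    (π : ℝ) (hπ : 1 ≤ π) (d : Fin T → ℝ) (hd : inD dlo dhi d) (t : Fin T) :
    0 ≤ pcr c dmax dlo π d t ∧ pcr c dmax dlo π d t ≤ min dmax (d t) := by
  have hne : Nonempty (Fin T) := ⟨t⟩
  set d' := ref dlo d t with hd'
  have hd'pos : ∀ k, 0 < d' k := by
    intro k
    simp only [hd', ref]
    split
    · exact hdlo.trans_le (hd k).1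
    · exact hdlo
  -- prefMax properties
  have hbddP : BddAbove (Set.range fun k : {k : Fin T // k ≤ t} => d k.1) :=
    (Set.finite_range _).bddAbove
  have hP_mem : ∀ k : Fin T, k ≤ t → d k ≤ prefMax d t := fun k hk =>
    le_ciSup hbddP (⟨k, hk⟩ : {k : Fin T // k ≤ t})
  have hdt_le : d t ≤ prefMax d t := hP_mem t le_rfl
  have hbdd' : BddAbove (Set.range d') := (Set.finite_range _).bddAbove
  have hsup_le : (⨆ k, d' k) ≤ prefMax d t := by
    apply ciSup_le
    intro k
    simp only [hd', ref]
    split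
    · exact hP_mem k ‹_›
    · exact (hd t).1.trans hdt_le
  -- the feasible-reduction set
  set S := {r | ∃ δ : Fin T → ℝ, Feasible c dmax d' δ ∧ r = Red d' δ} with hS
  have h0S : (0:ℝ) ∈ S := by
    refine ⟨fun _ => 0, ⟨by simpa using hc.le, fun k => ⟨le_rfl,
      le_min hdmax.le (hd'pos k).le⟩⟩, by simp [Red]⟩
  have hub : ∀ r ∈ S, r ≤ min dmax (⨆ k, d' k) := by
    rintro r ⟨δ, ⟨_, hδ⟩, rfl⟩
    have hsupsub : ∀ k, d' k - δ k ≤ ⨆ j, (d' j - δ j) :=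
      fun k => le_ciSup ((Set.finite_range (fun j => d' j - δ j)).bddAbove) k
    refine le_min ?_ ?_
    · obtain ⟨k0, hk0⟩ := Finite.exists_max d'
      have h1 : (⨆ k, d' k) ≤ d' k0 := ciSup_le hk0
      have h2 : d' k0 - δ k0 ≤ ⨆ j, (d' j - δ j) := hsupsub k0
      have h3 : δ k0 ≤ dmax := (hδ k0).2.trans (min_le_left _ _)
      simp only [Red]
      linarith
    · have h2 : (0:ℝ) ≤ ⨆ j, (d' j - δ j) := by
        refine le_trans ?_ (hsupsub t)
        have := (hδ t).2.trans (min_le_right _ _)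
        linarith
      simp only [Red]
      linarith [le_ciSup hbdd' t, hd'pos t]
  have hbddS : BddAbove S := ⟨_, hub⟩
  have hσ0 : 0 ≤ offOpt c dmax d' := le_csSup hbddS h0S
  have hσle : offOpt c dmax d' ≤ min dmax (⨆ k, d' k) := csSup_le ⟨0, h0S⟩ hub
  have hdiv : offOpt c dmax d' / π ≤ offOpt c dmax d' := div_le_self hσ0 hπ
  have hdt0 : 0 ≤ d t := (hdlo.trans_le (hd t).1).le
  constructor
  · exact le_max_right _ _
  · apply max_le
    · refine le_min ?_ ?_
      · have := hσle.trans (min_le_left _ _)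
        linarith
      · have := hσle.trans ((min_le_right _ _).trans hsup_le)
        linarith
    · exact le_min hdmax.le hdt0
end
end

section
/- For every π ≥ 1, every d ∈ D, and every t ∈ [T], the outputs of pCR-PRM(π) satisfy max_{k∈[t]} d_k − max_{k∈[t]} (d_k − δ_k(π,d)) ≥ σ(d^t)/π; that is, at every time slot t the peak reduction achieved so far by pCR-PRM(π) is at least a 1/π fraction of the offline optimal reduction under the reference profile d^t. -/
open Finset MeasureTheory

noncomputable section

lemma bddAbove_S {T : ℕ} (hT : 0 < T) (c dmax : ℝ)
    (d : Fin T → ℝ) :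
    BddAbove {r | ∃ δ : Fin T → ℝ, Feasible c dmax d δ ∧ r = Red d δ} := by
  haveI : Nonempty (Fin T) := ⟨⟨0, hT⟩⟩
  refine ⟨dmax, ?_⟩
  rintro r ⟨δ, hF, rfl⟩
  have h : (⨆ t, d t) ≤ (⨆ t, (d t - δ t)) + dmax := by
    refine ciSup_le fun j => ?_
    have h1 : δ j ≤ dmax := (hF.2 j).2.trans (min_le_left _ _)
    have h2 : d j - δ j ≤ ⨆ t, (d t - δ t) :=
      le_ciSup (f := fun t => d t - δ t) (Set.finite_range _).bddAbove j
    linarith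
  simp only [Red]
  linarith

lemma zero_mem_S {T : ℕ} (c dmax : ℝ) (hc : 0 ≤ c) (hdmax : 0 ≤ dmax)
    (d : Fin T → ℝ) (hd : ∀ j, 0 ≤ d j) :
    (0 : ℝ) ∈ {r | ∃ δ : Fin T → ℝ, Feasible c dmax d δ ∧ r = Red d δ} := by
  refine ⟨0, ⟨by simpa using hc, fun j => ⟨le_refl _, le_min hdmax (hd j)⟩⟩, ?_⟩
  simp [Red]

lemma offOpt_mono {T : ℕ} (hT : 0 < T) (c dmax : ℝ) (hc : 0 ≤ c) (hdmax : 0 ≤ dmax)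
    (d1 d2 : Fin T → ℝ) (h1 : ∀ j, 0 ≤ d1 j) (h12 : ∀ j, d1 j ≤ d2 j) :
    offOpt c dmax d2 ≤ offOpt c dmax d1 + ((⨆ j, d2 j) - ⨆ j, d1 j) := by
  haveI : Nonempty (Fin T) := ⟨⟨0, hT⟩⟩
  have h2 : ∀ j, 0 ≤ d2 j := fun j => (h1 j).trans (h12 j)
  refine csSup_le ⟨0, zero_mem_S c dmax hc hdmax d2 h2⟩ ?_
  rintro r ⟨δ, hF, rfl⟩
  set δ' : Fin T → ℝ := fun j => min (δ j) (d1 j) with hδ'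
  have hF' : Feasible c dmax d1 δ' := by
    refine ⟨le_trans (Finset.sum_le_sum fun j _ => min_le_left _ _) hF.1, fun j => ?_⟩
    exact ⟨le_min (hF.2 j).1 (h1 j),
      le_min (le_trans (min_le_left _ _) ((hF.2 j).2.trans (min_le_left _ _)))
        (min_le_right _ _)⟩
  have hpt : ∀ j, d1 j - δ' j ≤ d2 j - δ j := by
    intro j
    rcases le_total (δ j) (d1 j) with h | h
    · simp only [hδ', min_eq_left h]
      linarith [h12 j]
    · simp only [hδ', min_eq_right h]
      have := (hF.2 j).2.trans (min_le_right _ _)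
      linarith
  have hsup : (⨆ j, (d1 j - δ' j)) ≤ ⨆ j, (d2 j - δ j) :=
    ciSup_le fun j => (hpt j).trans
      (le_ciSup (f := fun j => d2 j - δ j) (Set.finite_range _).bddAbove j)
  have hmem : Red d1 δ' ≤ offOpt c dmax d1 :=
    le_csSup (bddAbove_S hT c dmax d1) ⟨δ', hF', rfl⟩
  simp only [Red] at hmem ⊢
  linarith

lemma sup_ref_eq {T : ℕ} (dlo dhi : ℝ) (d : Fin T → ℝ) (hd : inD dlo dhi d) (s : Fin T) :
    (⨆ j, ref dlo d s j) = prefMax d s := by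
  haveI : Nonempty (Fin T) := ⟨s⟩
  haveI : Nonempty {k : Fin T // k ≤ s} := ⟨⟨s, le_refl s⟩⟩
  apply le_antisymm
  · refine ciSup_le fun j => ?_
    by_cases h : j ≤ s
    · simp only [ref, if_pos h]
      exact le_ciSup (f := fun k : {k : Fin T // k ≤ s} => d k.1)
        (Set.finite_range _).bddAbove ⟨j, h⟩
    · simp only [ref, if_neg h]
      exact (hd s).1.trans
        (le_ciSup (f := fun k : {k : Fin T // k ≤ s} => d k.1)
          (Set.finite_range _).bddAbove ⟨s, le_refl s⟩)
  · refine ciSup_le fun k => ?_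
    have : d k.1 = ref dlo d s k.1 := by simp [ref, k.2]
    rw [this]
    exact le_ciSup (f := fun j => ref dlo d s j) (Set.finite_range _).bddAbove k.1

/-- `pCR-PRM(π)` maintains, at every slot `t`,
`max_{k∈[t]} d_k − max_{k∈[t]} (d_k − δ_k(π,d)) ≥ σ(d^t)/π`. -/
theorem stmt7 (T : ℕ) (hT : 0 < T) (c dmax dlo dhi : ℝ)
    (hc : 0 < c) (hdmax : 0 < dmax) (hdlo : 0 < dlo) (hbd : dlo ≤ dhi)
    (π : ℝ) (hπ : 1 ≤ π) (d : Fin T → ℝ) (hd : inD dlo dhi d) (t : Fin T) :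
    prefMax d t - (⨆ k : {k : Fin T // k ≤ t}, (d k.1 - pcr c dmax dlo π d k.1)) ≥
      offOpt c dmax (ref dlo d t) / π := by
  haveI : Nonempty (Fin T) := ⟨⟨0, hT⟩⟩
  haveI : Nonempty {k : Fin T // k ≤ t} := ⟨⟨t, le_refl t⟩⟩
  have hπ0 : (0 : ℝ) < π := lt_of_lt_of_le one_pos hπ
  rw [ge_iff_le, le_sub_comm]
  refine ciSup_le fun k => ?_
  -- step 1: d k - pcr k ≤ prefMax d k - σ(d^k)/π
  have h1 : d k.1 - pcr c dmax dlo π d k.1 ≤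
      prefMax d k.1 - offOpt c dmax (ref dlo d k.1) / π := by
    have := le_max_left (d k.1 - prefMax d k.1 + offOpt c dmax (ref dlo d k.1) / π) 0
    simp only [pcr]
    linarith
  -- prefix max is monotone
  have hpm : prefMax d k.1 ≤ prefMax d t := by
    haveI : Nonempty {j : Fin T // j ≤ k.1} := ⟨⟨k.1, le_refl _⟩⟩
    refine ciSup_le fun j => ?_
    exact le_ciSup (f := fun k : {k : Fin T // k ≤ t} => d k.1)
      (Set.finite_range _).bddAbove ⟨j.1, j.2.trans k.2⟩
  -- step 2: offOpt monotonicity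
  have href : ∀ j, ref dlo d k.1 j ≤ ref dlo d t j := by
    intro j
    simp only [ref]
    by_cases hj : j ≤ k.1
    · rw [if_pos hj, if_pos (hj.trans k.2)]
    · rw [if_neg hj]
      by_cases hj' : j ≤ t
      · rw [if_pos hj']; exact (hd j).1
      · rw [if_neg hj']
  have hpos : ∀ j, 0 ≤ ref dlo d k.1 j := by
    intro j
    simp only [ref]
    split <;> [exact le_of_lt (lt_of_lt_of_le hdlo (hd j).1); exact le_of_lt hdlo]
  have hmono := offOpt_mono hT c dmax hc.le hdmax.le (ref dlo d k.1) (ref dlo d t)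
    hpos href
  rw [sup_ref_eq dlo dhi d hd k.1, sup_ref_eq dlo dhi d hd t] at hmono
  -- combine
  set a := offOpt c dmax (ref dlo d t) with ha
  set b := offOpt c dmax (ref dlo d k.1) with hb
  have hdiv : (a - b) / π ≤ prefMax d t - prefMax d k.1 := by
    rw [div_le_iff₀ hπ0]
    nlinarith
  have hsd : (a - b) / π = a / π - b / π := sub_div _ _ _
  linarith
end
end

section
/- For every π ≥ 1, the following are equivalent: (i) for every d ∈ D the output vector (δ_1(π,d), …, δ_T(π,d)) of pCR-PRM(π) is a feasible discharging vector for d; (ii) Φ(π) ≤ c. -/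
open Finset MeasureTheory

noncomputable section

lemma le_prefMax {T : ℕ} (d : Fin T → ℝ) (t : Fin T) {k : Fin T} (hk : k ≤ t) :
    d k ≤ prefMax d t :=
  le_ciSup (f := fun k : {k : Fin T // k ≤ t} => d k.1)
    (Set.Finite.bddAbove (Set.finite_range _)) ⟨k, hk⟩

lemma offOpt_le {T : ℕ} (c dmax : ℝ) (d : Fin T → ℝ)
    {M : ℝ} (hM : 0 ≤ M)
    (h : ∀ δ : Fin T → ℝ, Feasible c dmax d δ → Red d δ ≤ M) :
    offOpt c dmax d ≤ M := by
  apply Real.sSup_le _ hM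
  rintro r ⟨δ, hδ, rfl⟩
  exact h δ hδ

lemma offOpt_le_dmax {T : ℕ} (hT : 0 < T) (c dmax : ℝ) (hdmax : 0 ≤ dmax)
    (d : Fin T → ℝ) : offOpt c dmax d ≤ dmax := by
  haveI : Nonempty (Fin T) := ⟨⟨0, hT⟩⟩
  refine offOpt_le c dmax d hdmax ?_
  intro δ hδ
  have h1 : (⨆ t, d t) ≤ dmax + ⨆ t, (d t - δ t) := by
    refine ciSup_le fun t => ?_
    have h2 : d t - δ t ≤ ⨆ t, (d t - δ t) :=
      le_ciSup (f := fun t => d t - δ t) (Set.Finite.bddAbove (Set.finite_range _)) t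
    have h3 := (hδ.2 t).2
    have h4 : δ t ≤ dmax := h3.trans (min_le_left _ _)
    linarith
  simp only [Red]; linarith

lemma offOpt_le_sup {T : ℕ} (hT : 0 < T) (c dmax : ℝ)
    (d : Fin T → ℝ) (hd : ∀ t, 0 ≤ d t) : offOpt c dmax d ≤ ⨆ t, d t := by
  haveI : Nonempty (Fin T) := ⟨⟨0, hT⟩⟩
  have hsup : 0 ≤ ⨆ t, d t := by
    refine le_trans (hd ⟨0, hT⟩) (le_ciSup (Set.Finite.bddAbove (Set.finite_range _)) _)
  refine offOpt_le c dmax d hsup ?_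
  intro δ hδ
  have h0 : (0 : ℝ) ≤ ⨆ t, (d t - δ t) := by
    have h3 := (hδ.2 ⟨0, hT⟩).2.trans (min_le_right _ _)
    refine le_trans (by linarith : (0:ℝ) ≤ d ⟨0, hT⟩ - δ ⟨0, hT⟩)
      (le_ciSup (f := fun t => d t - δ t) (Set.Finite.bddAbove (Set.finite_range _)) _)
  simp only [Red]; linarith

lemma pcr_le_dmax {T : ℕ} (hT : 0 < T) (c dmax dlo : ℝ) (hdmax : 0 ≤ dmax)
    {π : ℝ} (hπ : 1 ≤ π) (d : Fin T → ℝ) (t : Fin T) :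
    pcr c dmax dlo π d t ≤ dmax := by
  refine max_le ?_ hdmax
  have h1 : d t ≤ prefMax d t := le_prefMax d t le_rfl
  have h2 : offOpt c dmax (ref dlo d t) ≤ dmax := offOpt_le_dmax hT c dmax hdmax _
  have hπ0 : (0:ℝ) < π := lt_of_lt_of_le one_pos hπ
  have h3 : offOpt c dmax (ref dlo d t) / π ≤ dmax := by
    rw [div_le_iff₀ hπ0]; nlinarith
  linarith

/-- `pCR-PRM(π)` is feasible (for every `d ∈ D`) iff `Φ(π) ≤ c`. -/
theorem stmt8 (T : ℕ) (hT : 0 < T) (c dmax dlo dhi : ℝ)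
    (hc : 0 < c) (hdmax : 0 < dmax) (hdlo : 0 < dlo) (hbd : dlo ≤ dhi)
    (π : ℝ) (hπ : 1 ≤ π) :
    (∀ d : Fin T → ℝ, inD dlo dhi d → Feasible c dmax d (pcr c dmax dlo π d)) ↔
      Phi T c dmax dlo dhi π ≤ c := by
  haveI : Nonempty (Fin T) := ⟨⟨0, hT⟩⟩
  have hπ0 : (0:ℝ) < π := lt_of_lt_of_le one_pos hπ
  have hbdd : BddAbove {s | ∃ d : Fin T → ℝ, inD dlo dhi d ∧
      s = ∑ t, pcr c dmax dlo π d t} := by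
    refine ⟨T * dmax, ?_⟩
    rintro s ⟨d, hd, rfl⟩
    calc ∑ t, pcr c dmax dlo π d t ≤ ∑ _t : Fin T, dmax :=
          Finset.sum_le_sum fun t _ => pcr_le_dmax hT c dmax dlo hdmax.le hπ d t
      _ = T * dmax := by simp [Finset.sum_const, nsmul_eq_mul]
  constructor
  · intro h
    refine Real.sSup_le ?_ hc.le
    rintro s ⟨d, hd, rfl⟩
    exact (h d hd).1
  · intro hΦ d hd
    constructor
    · refine le_trans (le_csSup hbdd ⟨d, hd, rfl⟩) hΦ
    · intro t
      refine ⟨le_max_right _ _, le_min (pcr_le_dmax hT c dmax dlo hdmax.le hπ d t) ?_⟩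
      have h1 : d t ≤ prefMax d t := le_prefMax d t le_rfl
      have hdt : dlo ≤ d t := (hd t).1
      have href : ∀ k, 0 ≤ ref dlo d t k := by
        intro k
        simp only [ref]
        split_ifs
        · exact hdlo.le.trans (hd k).1
        · exact hdlo.le
      have hsup : (⨆ k, ref dlo d t k) ≤ prefMax d t := by
        refine ciSup_le fun k => ?_
        simp only [ref]
        split_ifs with hk
        · exact le_prefMax d t hk
        · exact hdt.trans h1
      have h2 : offOpt c dmax (ref dlo d t) ≤ prefMax d t :=
        (offOpt_le_sup hT c dmax _ href).trans hsup
      have hpm : 0 < prefMax d t := lt_of_lt_of_le hdlo (hdt.trans h1)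
      have h3 : offOpt c dmax (ref dlo d t) / π ≤ prefMax d t := by
        rw [div_le_iff₀ hπ0]; nlinarith
      refine max_le (by linarith) (hdlo.le.trans hdt)
end
end

section
/- The map d ↦ σ(d) is continuous on the open positive orthant {d ∈ ℝ^T : d_t > 0 for all t}. -/
open Finset MeasureTheory

noncomputable section

lemma aux_sup_le_sup_add {T : ℕ} [Nonempty (Fin T)] (f g : Fin T → ℝ) (ε : ℝ)
    (h : ∀ t, f t ≤ g t + ε) : (⨆ t, f t) ≤ (⨆ t, g t) + ε := by
  refine ciSup_le fun t => (h t).trans (add_le_add ?_ le_rfl)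
  exact le_ciSup (Set.Finite.bddAbove (Set.finite_range g)) t

lemma aux_bddAbove {T : ℕ} (hT : 0 < T) (c dmax : ℝ) (d : Fin T → ℝ) :
    ∀ r ∈ {r | ∃ δ : Fin T → ℝ, Feasible c dmax d δ ∧ r = Red d δ}, r ≤ ⨆ t, d t := by
  have : Nonempty (Fin T) := ⟨⟨0, hT⟩⟩
  rintro r ⟨δ, hf, rfl⟩
  have h0 : (0 : ℝ) ≤ ⨆ t, (d t - δ t) := by
    obtain ⟨t⟩ := ‹Nonempty (Fin T)›
    have h1 : δ t ≤ d t := (hf.2 t).2.trans (min_le_right _ _)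
    exact le_trans (by linarith) (le_ciSup (Set.Finite.bddAbove (Set.finite_range _)) t)
  unfold Red; linarith

lemma aux_zero_mem {T : ℕ} (c dmax : ℝ) (hc : 0 < c) (hdmax : 0 < dmax)
    (d : Fin T → ℝ) (hd : ∀ t, 0 < d t) :
    (0 : ℝ) ∈ {r | ∃ δ : Fin T → ℝ, Feasible c dmax d δ ∧ r = Red d δ} := by
  refine ⟨0, ⟨by simpa using hc.le, fun t => ⟨le_refl _, le_min hdmax.le (hd t).le⟩⟩, ?_⟩
  simp [Red]

lemma aux_key {T : ℕ} (hT : 0 < T) (c dmax : ℝ) (hc : 0 < c) (hdmax : 0 < dmax)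
    (d d' : Fin T → ℝ) (hd : ∀ t, 0 < d t) (hd' : ∀ t, 0 < d' t)
    (ε : ℝ) (hε0 : 0 ≤ ε) (hε : ∀ t, |d t - d' t| ≤ ε) :
    offOpt c dmax d ≤ offOpt c dmax d' + 3 * ε := by
  have : Nonempty (Fin T) := ⟨⟨0, hT⟩⟩
  have hbdd' : BddAbove {r | ∃ δ : Fin T → ℝ, Feasible c dmax d' δ ∧ r = Red d' δ} :=
    ⟨_, aux_bddAbove hT c dmax d'⟩
  have hσ'0 : (0 : ℝ) ≤ offOpt c dmax d' :=
    le_csSup hbdd' (aux_zero_mem c dmax hc hdmax d' hd')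
  refine Real.sSup_le ?_ (by linarith)
  rintro r ⟨δ, hf, rfl⟩
  set δ' : Fin T → ℝ := fun t => max 0 (min (δ t) (min dmax (d' t))) with hδ'
  have hδ'le : ∀ t, δ' t ≤ δ t := fun t => max_le (hf.2 t).1 (min_le_left _ _)
  have hf' : Feasible c dmax d' δ' := by
    refine ⟨le_trans (Finset.sum_le_sum fun t _ => hδ'le t) hf.1, fun t =>
      ⟨le_max_left _ _, max_le (le_min hdmax.le (hd' t).le) (min_le_right _ _)⟩⟩
  have hlow : ∀ t, δ t - ε ≤ δ' t := by
    intro t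
    have h1 : δ t ≤ dmax := (hf.2 t).2.trans (min_le_left _ _)
    have h2 : δ t ≤ d t := (hf.2 t).2.trans (min_le_right _ _)
    have h3 := abs_le.mp (hε t)
    refine le_trans (le_min (by linarith) (le_min (by linarith) (by linarith)))
      (le_max_right _ _)
  have h1 : (⨆ t, d t) ≤ (⨆ t, d' t) + ε := by
    refine aux_sup_le_sup_add _ _ _ fun t => ?_
    have := abs_le.mp (hε t); linarith
  have h2 : (⨆ t, (d' t - δ' t)) ≤ (⨆ t, (d t - δ t)) + 2 * ε := by
    refine aux_sup_le_sup_add _ _ _ fun t => ?_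
    have := abs_le.mp (hε t)
    have := hlow t
    linarith
  have hmem : Red d' δ' ∈ {r | ∃ δ : Fin T → ℝ, Feasible c dmax d' δ ∧ r = Red d' δ} :=
    ⟨δ', hf', rfl⟩
  have hle : Red d' δ' ≤ offOpt c dmax d' := le_csSup hbdd' hmem
  have hfin : Red d δ ≤ Red d' δ' + 3 * ε := by unfold Red; linarith
  show Red d δ ≤ offOpt c dmax d' + 3 * ε
  linarith

/-- `d ↦ σ(d)` is continuous on the open positive orthant. -/
theorem stmt11 (T : ℕ) (hT : 0 < T) (c dmax : ℝ) (hc : 0 < c) (hdmax : 0 < dmax) :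
    ContinuousOn (fun d : Fin T → ℝ => offOpt c dmax d)
      {d : Fin T → ℝ | ∀ t, 0 < d t} := by
  refine LipschitzOnWith.continuousOn (K := 3) ?_
  rw [lipschitzOnWith_iff_dist_le_mul]
  intro x hx y hy
  have hdistlt : ∀ t, |x t - y t| ≤ dist x y := fun t => by
    rw [← Real.dist_eq]; exact dist_le_pi_dist x y t
  have hdistlt' : ∀ t, |y t - x t| ≤ dist x y := fun t => by
    rw [abs_sub_comm]; exact hdistlt t
  have hd0 : (0:ℝ) ≤ dist x y := dist_nonneg
  have k1 := aux_key hT c dmax hc hdmax x y hx hy (dist x y) hd0 hdistlt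
  have k2 := aux_key hT c dmax hc hdmax y x hy hx (dist x y) hd0 hdistlt'
  rw [Real.dist_eq, abs_le]
  push_cast
  constructor <;> linarith
end
end

section
/- Suppose π* ≥ 1 satisfies Φ(π*) = c. Then for every deterministic online algorithm A there exists d ∈ D such that σ(d) ≥ π* · σ_A(d); that is, no deterministic online algorithm achieves a competitive ratio strictly smaller than π*, so π* is the best possible competitive ratio among all online algorithms for the peak-demand reduction maximization problem. -/
open Finset MeasureTheory

noncomputable section

lemma fsup_le_add {ι : Type*} [Nonempty ι] [Finite ι] (f g : ι → ℝ) (a : ℝ)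
    (h : ∀ i, f i ≤ g i + a) : (⨆ i, f i) ≤ (⨆ i, g i) + a :=
  ciSup_le fun i => (h i).trans (add_le_add (le_ciSup (Set.finite_range g).bddAbove i) (le_refl a))

lemma red_le_sup {T : ℕ} [Nonempty (Fin T)] {c dmax : ℝ} {d δ : Fin T → ℝ}
    (hδ : Feasible c dmax d δ) : Red d δ ≤ ⨆ t, d t := by
  obtain ⟨t0⟩ := (inferInstance : Nonempty (Fin T))
  have h1 : d t0 - δ t0 ≤ ⨆ t, (d t - δ t) :=
    le_ciSup (f := fun t => d t - δ t) (Set.finite_range _).bddAbove t0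
  have h2 : 0 ≤ d t0 - δ t0 := by
    have := (hδ.2 t0).2
    have := min_le_right dmax (d t0)
    linarith
  unfold Red; linarith

lemma offOpt_bddAbove {T : ℕ} [Nonempty (Fin T)] {c dmax : ℝ} (d : Fin T → ℝ) :
    BddAbove {r | ∃ δ : Fin T → ℝ, Feasible c dmax d δ ∧ r = Red d δ} := by
  refine ⟨⨆ t, d t, ?_⟩
  rintro r ⟨δ, hδ, rfl⟩
  exact red_le_sup hδ

lemma offOpt_zero_mem {T : ℕ} {c dmax : ℝ} (hc : 0 ≤ c) (hdmax : 0 ≤ dmax)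
    {d : Fin T → ℝ} (hd : ∀ t, 0 ≤ d t) :
    (0:ℝ) ∈ {r | ∃ δ : Fin T → ℝ, Feasible c dmax d δ ∧ r = Red d δ} := by
  refine ⟨fun _ => 0, ⟨by simpa using hc, fun t => ⟨le_refl 0, le_min hdmax (hd t)⟩⟩, by simp [Red]⟩

lemma offOpt_le_of_close {T : ℕ} [Nonempty (Fin T)] {c dmax : ℝ}
    (hc : 0 ≤ c) (hdmax : 0 ≤ dmax) {d d' : Fin T → ℝ}
    (hd : ∀ t, 0 ≤ d t) (hd' : ∀ t, 0 ≤ d' t) :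
    offOpt c dmax d ≤ offOpt c dmax d' + 3 * dist d d' := by
  set D := dist d d' with hDdef
  have hD : 0 ≤ D := dist_nonneg
  have hpt : ∀ t, |d t - d' t| ≤ D := fun t => by
    have := dist_le_pi_dist d d' t; rwa [Real.dist_eq] at this
  apply csSup_le ⟨0, offOpt_zero_mem hc hdmax hd⟩
  rintro r ⟨δ, hδ, rfl⟩
  set δ' : Fin T → ℝ := fun t => min (δ t) (min dmax (d' t)) with hδ'def
  have hδ'le : ∀ t, δ t - D ≤ δ' t := by
    intro t
    have h1 := (hδ.2 t).2
    have h2 := min_le_left dmax (d t)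
    have h3 := min_le_right dmax (d t)
    have h4 := abs_le.1 (hpt t)
    refine le_min (by linarith) (le_min (by linarith) (by linarith))
  have hfeas' : Feasible c dmax d' δ' := by
    refine ⟨le_trans (Finset.sum_le_sum fun t _ => min_le_left _ _) hδ.1, fun t => ?_⟩
    exact ⟨le_min (hδ.2 t).1 (le_min hdmax (hd' t)), min_le_right _ _⟩
  have hs1 : (⨆ t, d t) ≤ (⨆ t, d' t) + D :=
    fsup_le_add _ _ _ fun t => by have := abs_le.1 (hpt t); linarith
  have hs2 : (⨆ t, (d' t - δ' t)) ≤ (⨆ t, (d t - δ t)) + 2 * D := by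
    refine fsup_le_add _ _ _ fun t => ?_
    have h1 := hδ'le t
    have h2 := abs_le.1 (hpt t)
    linarith
  have h2 : Red d' δ' ≤ offOpt c dmax d' := le_csSup (offOpt_bddAbove d') ⟨δ', hfeas', rfl⟩
  have : Red d δ ≤ Red d' δ' + 3 * D := by unfold Red; linarith
  linarith

lemma sup_ref {T : ℕ} [Nonempty (Fin T)] {dlo : ℝ} {d : Fin T → ℝ}
    (hd : ∀ k, dlo ≤ d k) (t : Fin T) :
    (⨆ k, ref dlo d t k) = prefMax d t := by
  haveI : Nonempty {k : Fin T // k ≤ t} := ⟨⟨t, le_refl t⟩⟩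
  apply le_antisymm
  · apply ciSup_le; intro k
    by_cases h : k ≤ t
    · simp only [ref, if_pos h]
      exact le_ciSup (f := fun k : {k : Fin T // k ≤ t} => d k.1)
        (Set.finite_range _).bddAbove (⟨k, h⟩ : {k : Fin T // k ≤ t})
    · simp only [ref, if_neg h]
      exact (hd t).trans (le_ciSup (Set.finite_range fun k : {k : Fin T // k ≤ t} => d k.1).bddAbove
        (⟨t, le_refl t⟩ : {k : Fin T // k ≤ t}))
  · apply ciSup_le; rintro ⟨k, hk⟩
    have h : d k = ref dlo d t k := by simp [ref, hk]
    rw [h]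
    exact le_ciSup (f := fun k => ref dlo d t k) (Set.finite_range _).bddAbove k

lemma dist_ref_le {T : ℕ} {dlo : ℝ} (d d' : Fin T → ℝ) (t : Fin T) :
    dist (ref dlo d t) (ref dlo d' t) ≤ dist d d' := by
  rw [dist_pi_le_iff dist_nonneg]
  intro k
  by_cases h : k ≤ t
  · simpa [ref, h] using dist_le_pi_dist d d' k
  · simp [ref, h, dist_nonneg]

lemma prefMax_le_add {T : ℕ} (d d' : Fin T → ℝ) (t : Fin T) :
    prefMax d t ≤ prefMax d' t + dist d d' := by
  haveI : Nonempty {k : Fin T // k ≤ t} := ⟨⟨t, le_refl t⟩⟩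
  refine fsup_le_add _ _ _ fun k => ?_
  have := dist_le_pi_dist d d' k.1
  rw [Real.dist_eq] at this
  have := abs_le.1 this
  linarith [this.1]

lemma pcr_le_add {T : ℕ} [Nonempty (Fin T)] {c dmax dlo dhi π : ℝ}
    (hc : 0 ≤ c) (hdmax : 0 ≤ dmax) (hdlo : 0 ≤ dlo) (hπ : 1 ≤ π)
    {d d' : Fin T → ℝ} (hd : inD dlo dhi d) (hd' : inD dlo dhi d') (t : Fin T) :
    pcr c dmax dlo π d t ≤ pcr c dmax dlo π d' t + 5 * dist d d' := by
  set D := dist d d' with hDdef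
  have hD : 0 ≤ D := dist_nonneg
  have ha : d t ≤ d' t + D := by
    have := dist_le_pi_dist d d' t
    rw [Real.dist_eq] at this
    have := abs_le.1 this
    linarith [this.2]
  have hb : prefMax d' t ≤ prefMax d t + D := by
    have := prefMax_le_add d' d t
    rwa [dist_comm] at this
  have hrefpos : ∀ (e : Fin T → ℝ), inD dlo dhi e → ∀ k, 0 ≤ ref dlo e t k := by
    intro e he k
    by_cases h : k ≤ t <;> simp [ref, h]
    · exact hdlo.trans (he k).1
    · exact hdlo
  have hco : offOpt c dmax (ref dlo d t) ≤ offOpt c dmax (ref dlo d' t) + 3 * D := by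
    have h1 := offOpt_le_of_close (T := T) hc hdmax (hrefpos d hd) (hrefpos d' hd')
    have h2 := dist_ref_le (dlo := dlo) d d' t
    linarith
  have hπ0 : 0 < π := lt_of_lt_of_le one_pos hπ
  have hdiv : offOpt c dmax (ref dlo d t) / π ≤ offOpt c dmax (ref dlo d' t) / π + 3 * D := by
    have h3 : (3 * D) / π ≤ 3 * D := div_le_self (by linarith) hπ
    calc offOpt c dmax (ref dlo d t) / π
        ≤ (offOpt c dmax (ref dlo d' t) + 3 * D) / π := by gcongr
      _ = offOpt c dmax (ref dlo d' t) / π + (3 * D) / π := by ring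
      _ ≤ _ := by linarith
  have hexpr : d t - prefMax d t + offOpt c dmax (ref dlo d t) / π
      ≤ (d' t - prefMax d' t + offOpt c dmax (ref dlo d' t) / π) + 5 * D := by
    linarith
  unfold pcr
  refine max_le (hexpr.trans ?_) (by positivity)
  have := le_max_left (d' t - prefMax d' t + offOpt c dmax (ref dlo d' t) / π) (0:ℝ)
  linarith

/-- if `Φ(π*) = c`, then no deterministic online algorithm (causal and
feasible on `D`) achieves a competitive ratio strictly smaller than `π*`:
there exists `d ∈ D` with `σ(d) ≥ π* · σ_A(d)`. -/
theorem stmt13 (T : ℕ) (hT : 0 < T) (c dmax dlo dhi : ℝ)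
    (hc : 0 < c) (hdmax : 0 < dmax) (hdlo : 0 < dlo) (hbd : dlo ≤ dhi)
    (π : ℝ) (hπ : 1 ≤ π) (hΦ : Phi T c dmax dlo dhi π = c)
    (A : (Fin T → ℝ) → (Fin T → ℝ))
    (hcausal : ∀ d d' : Fin T → ℝ, inD dlo dhi d → inD dlo dhi d' →
      ∀ t : Fin T, (∀ k : Fin T, k ≤ t → d k = d' k) → A d t = A d' t)
    (hAfeas : ∀ d : Fin T → ℝ, inD dlo dhi d → Feasible c dmax d (A d)) :
    ∃ d : Fin T → ℝ, inD dlo dhi d ∧ π * Red d (A d) ≤ offOpt c dmax d := by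
  by_contra hcon
  push_neg at hcon
  haveI : Nonempty (Fin T) := ⟨⟨0, hT⟩⟩
  have hπ0 : 0 < π := lt_of_lt_of_le one_pos hπ
  -- Step A: strict per-slot lower bound on the algorithm's discharge
  have key : ∀ d : Fin T → ℝ, inD dlo dhi d → ∀ t : Fin T,
      d t - prefMax d t + offOpt c dmax (ref dlo d t) / π < A d t := by
    intro d hd t
    have href : inD dlo dhi (ref dlo d t) := by
      intro k
      by_cases h : k ≤ t <;> simp [ref, h]
      · exact hd k
      · exact hbd
    have hAeq : A (ref dlo d t) t = A d t := by
      refine hcausal (ref dlo d t) d href hd t fun k hk => ?_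
      simp [ref, hk]
    have hRed : Red (ref dlo d t) (A (ref dlo d t)) ≤ prefMax d t - (d t - A d t) := by
      unfold Red
      rw [sup_ref (fun k => (hd k).1) t]
      have h2 : d t - A d t ≤ ⨆ k, (ref dlo d t k - A (ref dlo d t) k) := by
        have he : ref dlo d t t - A (ref dlo d t) t = d t - A d t := by
          simp [ref, hAeq]
        rw [← he]
        exact le_ciSup (f := fun k => ref dlo d t k - A (ref dlo d t) k)
          (Set.finite_range _).bddAbove t
      linarith
    have hlt := hcon _ href
    have h3 : offOpt c dmax (ref dlo d t) < π * (prefMax d t - (d t - A d t)) :=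
      hlt.trans_le (mul_le_mul_of_nonneg_left hRed hπ0.le)
    have h4 : offOpt c dmax (ref dlo d t) / π < prefMax d t - (d t - A d t) := by
      rw [div_lt_iff₀ hπ0]
      linarith [h3]
    linarith
  have keyle : ∀ d : Fin T → ℝ, inD dlo dhi d → ∀ t : Fin T,
      pcr c dmax dlo π d t ≤ A d t := fun d hd t =>
    max_le (key d hd t).le ((hAfeas d hd).2 t).1
  have keylt : ∀ d : Fin T → ℝ, inD dlo dhi d → ∀ t : Fin T,
      0 < pcr c dmax dlo π d t → pcr c dmax dlo π d t < A d t := by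
    intro d hd t hpos
    have h0 : 0 < d t - prefMax d t + offOpt c dmax (ref dlo d t) / π := by
      rcases lt_max_iff.mp hpos with h | h
      · exact h
      · exact absurd h (lt_irrefl 0)
    have : pcr c dmax dlo π d t = d t - prefMax d t + offOpt c dmax (ref dlo d t) / π :=
      max_eq_left h0.le
    rw [this]
    exact key d hd t
  -- Step B: compactness and continuity; attain the sup of the inventory sum
  set F : (Fin T → ℝ) → ℝ := fun d => ∑ t, pcr c dmax dlo π d t with hF
  set S : Set (Fin T → ℝ) := {d | inD dlo dhi d} with hSdef
  have hSeq : S = Set.pi Set.univ (fun _ : Fin T => Set.Icc dlo dhi) := by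
    ext d
    simp [hSdef, inD, Set.mem_pi, Set.mem_Icc, forall_and, Pi.le_def]
  have hScomp : IsCompact S := hSeq ▸ isCompact_univ_pi fun _ => isCompact_Icc
  have hSne : S.Nonempty := ⟨fun _ => dlo, fun t => ⟨le_refl _, hbd⟩⟩
  have hFlip : ∀ d ∈ S, ∀ d' ∈ S, F d ≤ F d' + (5 * T) * dist d d' := by
    intro d hd d' hd'
    calc F d ≤ ∑ t : Fin T, (pcr c dmax dlo π d' t + 5 * dist d d') :=
          Finset.sum_le_sum fun t _ => pcr_le_add hc.le hdmax.le hdlo.le hπ hd hd' t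
      _ = F d' + (5 * T) * dist d d' := by
          rw [Finset.sum_add_distrib, Finset.sum_const, Finset.card_univ]
          simp [nsmul_eq_mul]
          ring
  have hFcont : ContinuousOn F S := by
    rw [Metric.continuousOn_iff]
    intro b hb ε hε
    refine ⟨ε / (5 * T + 1), by positivity, fun a ha hab => ?_⟩
    have hT1 : (0:ℝ) < 5 * T + 1 := by positivity
    have h1 : F a - F b ≤ (5 * T) * dist a b := by
      have := hFlip a ha b hb; linarith
    have h2 : F b - F a ≤ (5 * T) * dist a b := by
      have := hFlip b hb a ha
      rw [dist_comm] at this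
      linarith
    have h3 : |F a - F b| ≤ (5 * T) * dist a b := abs_le.2 ⟨by linarith, h1⟩
    rw [Real.dist_eq]
    have h4 : (5 * T : ℝ) * dist a b < (5 * T + 1) * (ε / (5 * T + 1)) := by
      have h5 : (0:ℝ) ≤ 5 * T := by positivity
      have h6 : (0:ℝ) ≤ dist a b := dist_nonneg
      nlinarith
    have h7 : (5 * T + 1 : ℝ) * (ε / (5 * T + 1)) = ε := by
      field_simp
    linarith
  obtain ⟨dstar, hdstarS, hmax⟩ := hScomp.exists_isMaxOn hSne hFcont
  have hdstar : inD dlo dhi dstar := hdstarS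
  have hcle : c ≤ F dstar := by
    rw [← hΦ]
    unfold Phi
    have hmem : F dstar ∈ {s | ∃ d : Fin T → ℝ, inD dlo dhi d ∧ s = ∑ t, pcr c dmax dlo π d t} :=
      ⟨dstar, hdstar, rfl⟩
    refine csSup_le ⟨F dstar, hmem⟩ ?_
    rintro s ⟨d, hd, rfl⟩
    exact hmax hd
  -- Step C: contradiction with the capacity constraint
  have hpos : ∃ t : Fin T, 0 < pcr c dmax dlo π dstar t := by
    by_contra h
    push_neg at h
    have : F dstar ≤ 0 := Finset.sum_nonpos fun t _ => h t
    linarith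
  obtain ⟨t0, ht0⟩ := hpos
  have hsumlt : F dstar < ∑ t, A dstar t :=
    Finset.sum_lt_sum (fun t _ => keyle dstar hdstar t)
      ⟨t0, Finset.mem_univ _, keylt dstar hdstar t0 ht0⟩
  have hcap : ∑ t, A dstar t ≤ c := (hAfeas dstar hdstar).1
  linarith
end
end

section
/- Suppose π* ≥ 1 satisfies Φ(π*) = c. Then there exist a demand profile d ∈ D and an index k ∈ [T] such that ∑_{t=1}^T δ_t(π*,d) = c, δ_t(π*,d) > 0 for all t ≤ k, and δ_t(π*,d) = 0 for all t > k; that is, there is a worst-case input sequence for pCR-PRM(π*) on which the algorithm discharges strictly positive amounts in an initial block of consecutive slots until exhausting the capacity, and nothing afterwards. -/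
open Finset MeasureTheory

noncomputable section

namespace Aux15

variable {T : ℕ}

lemma le_fin_sup [NeZero T] (f : Fin T → ℝ) (i : Fin T) : f i ≤ ⨆ j, f j :=
  le_ciSup (Set.finite_range f).bddAbove i

lemma fin_sup_le [NeZero T] {f : Fin T → ℝ} {a : ℝ} (h : ∀ i, f i ≤ a) : (⨆ j, f j) ≤ a :=
  ciSup_le h

instance prefNE (t : Fin T) : Nonempty {k : Fin T // k ≤ t} := ⟨⟨t, le_rfl⟩⟩

lemma le_prefMax (d : Fin T → ℝ) {j t : Fin T} (h : j ≤ t) : d j ≤ prefMax d t := by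
  have h2 := le_ciSup (f := fun k : {k : Fin T // k ≤ t} => d k.1)
    (Set.finite_range _).bddAbove ⟨j, h⟩
  simpa [prefMax] using h2

lemma prefMax_le {d : Fin T → ℝ} {t : Fin T} {a : ℝ} (h : ∀ j, j ≤ t → d j ≤ a) :
    prefMax d t ≤ a := ciSup_le fun k => h k.1 k.2

lemma exists_prefMax_eq (d : Fin T → ℝ) (t : Fin T) : ∃ j, j ≤ t ∧ prefMax d t = d j := by
  obtain ⟨k, hk⟩ := Finite.exists_max (fun k : {k : Fin T // k ≤ t} => d k.1)
  exact ⟨k.1, k.2, le_antisymm (ciSup_le hk) (le_prefMax d k.2)⟩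

lemma prefMax_congr {d e : Fin T → ℝ} {t : Fin T} (h : ∀ j, j ≤ t → d j = e j) :
    prefMax d t = prefMax e t := by
  have h2 : (fun k : {k : Fin T // k ≤ t} => d k.1) = fun k => e k.1 :=
    funext fun k => h k.1 k.2
  simp only [prefMax, h2]

lemma ref_congr {dlo : ℝ} {d e : Fin T → ℝ} {t : Fin T} (h : ∀ j, j ≤ t → d j = e j) :
    ref dlo d t = ref dlo e t := by
  funext j; simp only [ref]; split_ifs with hj
  · exact h j hj
  · rfl

lemma pcr_prefix_congr (c dmax dlo π : ℝ) {d e : Fin T → ℝ} {t : Fin T}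
    (h : ∀ j, j ≤ t → d j = e j) : pcr c dmax dlo π d t = pcr c dmax dlo π e t := by
  simp only [pcr, prefMax_congr h, ref_congr (dlo := dlo) h, h t le_rfl]

lemma feasible_zero {c dmax : ℝ} (hc : 0 ≤ c) (hdmax : 0 ≤ dmax) {d : Fin T → ℝ}
    (hd : ∀ t, 0 ≤ d t) : Feasible c dmax d fun _ => 0 :=
  ⟨by simpa using hc, fun t => ⟨le_rfl, le_min hdmax (hd t)⟩⟩

lemma red_le_sup [NeZero T] {c dmax : ℝ} {d δ : Fin T → ℝ} (h : Feasible c dmax d δ) :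
    Red d δ ≤ ⨆ t, d t := by
  have i : Fin T := Classical.arbitrary _
  have h0 : (0:ℝ) ≤ ⨆ t, d t - δ t := by
    refine le_trans ?_ (le_fin_sup _ i)
    have h1 := (h.2 i).2
    have h2 := min_le_right dmax (d i)
    linarith
  simp only [Red]; linarith

lemma bddAbove_optSet [NeZero T] (c dmax : ℝ) (d : Fin T → ℝ) :
    BddAbove {r | ∃ δ, Feasible c dmax d δ ∧ r = Red d δ} :=
  ⟨⨆ t, d t, by rintro r ⟨δ, hf, rfl⟩; exact red_le_sup hf⟩

lemma le_offOpt [NeZero T] {c dmax : ℝ} {d δ : Fin T → ℝ} (h : Feasible c dmax d δ) :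
    Red d δ ≤ offOpt c dmax d :=
  le_csSup (bddAbove_optSet c dmax d) ⟨δ, h, rfl⟩

lemma offOpt_nonneg [NeZero T] {c dmax : ℝ} (hc : 0 ≤ c) (hdmax : 0 ≤ dmax) {d : Fin T → ℝ}
    (hd : ∀ t, 0 ≤ d t) : 0 ≤ offOpt c dmax d := by
  have h := le_offOpt (feasible_zero hc hdmax hd)
  simpa [Red] using h

lemma offOpt_le_sup [NeZero T] {c dmax : ℝ} (hc : 0 ≤ c) (hdmax : 0 ≤ dmax) {d : Fin T → ℝ}
    (hd : ∀ t, 0 ≤ d t) : offOpt c dmax d ≤ ⨆ t, d t :=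
  csSup_le ⟨_, ⟨_, feasible_zero hc hdmax hd, rfl⟩⟩
    (by rintro r ⟨δ, hf, rfl⟩; exact red_le_sup hf)

/-- Key comparison lemma: if `r'` dominates `r` up to a permutation `g` and slack `ρ`,
then `offOpt r ≤ offOpt r' + 2ρ`. -/
lemma offOpt_le_offOpt [NeZero T] {c dmax : ℝ} (hc : 0 ≤ c) (hdmax : 0 ≤ dmax)
    {r r' : Fin T → ℝ} (hr : ∀ j, 0 ≤ r j) (hr' : ∀ j, 0 ≤ r' j)
    (g : Equiv.Perm (Fin T)) {ρ : ℝ} (hρ : 0 ≤ ρ)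
    (hle : ∀ j, r' j ≤ r (g j) + ρ) (hsup : (⨆ j, r j) ≤ (⨆ j, r' j) + ρ) :
    offOpt c dmax r ≤ offOpt c dmax r' + 2 * ρ := by
  refine csSup_le ⟨_, ⟨_, feasible_zero hc hdmax hr, rfl⟩⟩ ?_
  rintro x ⟨δ, hf, rfl⟩
  set δ' : Fin T → ℝ := fun j => min (δ (g j)) (r' j) with hδ'
  have hf' : Feasible c dmax r' δ' := by
    constructor
    · calc ∑ j, δ' j ≤ ∑ j, δ (g j) := Finset.sum_le_sum fun j _ => min_le_left _ _
        _ = ∑ j, δ j := Equiv.sum_comp g δ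
        _ ≤ c := hf.1
    · intro j
      refine ⟨le_min (hf.2 (g j)).1 (hr' j), le_min ?_ (min_le_right _ _)⟩
      exact le_trans (min_le_left _ _) (le_trans (hf.2 (g j)).2 (min_le_left _ _))
  have h0 : (0:ℝ) ≤ ⨆ j, r j - δ j := by
    have i : Fin T := Classical.arbitrary _
    refine le_trans ?_ (le_fin_sup _ i)
    have h1 := (hf.2 i).2
    have h2 := min_le_right dmax (r i)
    linarith
  have hsub : (⨆ j, r' j - δ' j) ≤ (⨆ j, r j - δ j) + ρ := by
    refine fin_sup_le fun j => ?_
    rcases le_total (δ (g j)) (r' j) with hcase | hcase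
    · have he : δ' j = δ (g j) := min_eq_left hcase
      rw [he]
      have h1 : r' j - δ (g j) ≤ r (g j) - δ (g j) + ρ := by have := hle j; linarith
      exact le_trans h1 (by have := le_fin_sup (fun j => r j - δ j) (g j); simp at this ⊢; linarith)
    · have he : δ' j = r' j := min_eq_right hcase
      rw [he]; linarith
  have hred : Red r δ ≤ Red r' δ' + 2 * ρ := by
    simp only [Red]; linarith
  exact le_trans hred (by have := le_offOpt hf'; linarith)

/-- Positivity: any profile with entries `≥ dlo` admits a positive peak reduction. -/
lemma eps_le_offOpt [NeZero T] {c dmax dlo : ℝ} (hc : 0 < c) (hdmax : 0 < dmax) (hdlo : 0 < dlo)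
    {r : Fin T → ℝ} (hr : ∀ j, dlo ≤ r j) :
    min dlo (min dmax (c / T)) ≤ offOpt c dmax r := by
  have hT : (0:ℝ) < T := by
    exact_mod_cast Nat.pos_of_ne_zero (NeZero.ne T)
  set ε := min dlo (min dmax (c / T)) with hε
  have hεpos : 0 < ε := lt_min hdlo (lt_min hdmax (div_pos hc hT))
  have hεdlo : ε ≤ dlo := min_le_left _ _
  have hεdmax : ε ≤ dmax := le_trans (min_le_right _ _) (min_le_left _ _)
  have hεcT : ε ≤ c / T := le_trans (min_le_right _ _) (min_le_right _ _)
  set P := ⨆ j, r j with hP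
  have hjP : ∀ j, r j ≤ P := fun j => le_fin_sup r j
  set δ : Fin T → ℝ := fun j => max (r j - (P - ε)) 0 with hδ
  have hδε : ∀ j, δ j ≤ ε := fun j => max_le (by have := hjP j; linarith) hεpos.le
  have hfeas : Feasible c dmax r δ := by
    constructor
    · calc ∑ j, δ j ≤ ∑ _j : Fin T, ε := Finset.sum_le_sum fun j _ => hδε j
        _ = T * ε := by
            rw [Finset.sum_const, Finset.card_univ, Fintype.card_fin, nsmul_eq_mul]
        _ ≤ T * (c / T) := mul_le_mul_of_nonneg_left hεcT hT.le
        _ = c := by field_simp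
    · intro j
      exact ⟨le_max_right _ _, le_min (le_trans (hδε j) hεdmax)
        (le_trans (hδε j) (le_trans hεdlo (hr j)))⟩
  have hsup2 : (⨆ j, r j - δ j) ≤ P - ε := by
    refine fin_sup_le fun j => ?_
    have h1 : r j - (P - ε) ≤ δ j := le_max_left _ _
    linarith
  have hred : ε ≤ Red r δ := by
    simp only [Red]
    have := hsup2
    simp only [← hP]
    linarith
  exact le_trans hred (le_offOpt hfeas)

lemma ref_mem {dlo dhi : ℝ} (hbd : dlo ≤ dhi) {d : Fin T → ℝ} (hd : inD dlo dhi d)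
    (t j : Fin T) : dlo ≤ ref dlo d t j ∧ ref dlo d t j ≤ dhi := by
  simp only [ref]; split_ifs
  · exact hd j
  · exact ⟨le_rfl, hbd⟩

lemma sup_ref [NeZero T] {dlo dhi : ℝ} {d : Fin T → ℝ} (hd : inD dlo dhi d) (t : Fin T) :
    (⨆ j, ref dlo d t j) = prefMax d t := by
  apply le_antisymm
  · refine fin_sup_le fun j => ?_
    simp only [ref]; split_ifs with hj
    · exact le_prefMax d hj
    · exact le_trans (hd t).1 (le_prefMax d le_rfl)
  · obtain ⟨j, hj, hEq⟩ := exists_prefMax_eq d t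
    rw [hEq]
    have h2 : ref dlo d t j = d j := by simp [ref, hj]
    rw [← h2]; exact le_fin_sup _ j

lemma pcr_nonneg (c dmax dlo π : ℝ) (d : Fin T → ℝ) (t : Fin T) :
    0 ≤ pcr c dmax dlo π d t := le_max_right _ _

lemma pcr_pos_of_peak [NeZero T] {c dmax dlo dhi π : ℝ} (hc : 0 < c) (hdmax : 0 < dmax)
    (hdlo : 0 < dlo) (hπ : 1 ≤ π) {d : Fin T → ℝ} (hd : inD dlo dhi d) {t : Fin T}
    (ht : prefMax d t ≤ d t) : 0 < pcr c dmax dlo π d t := by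
  have hT : (0:ℝ) < T := by exact_mod_cast Nat.pos_of_ne_zero (NeZero.ne T)
  have hσ : min dlo (min dmax (c / T)) ≤ offOpt c dmax (ref dlo d t) :=
    eps_le_offOpt hc hdmax hdlo
      (fun j => by simp only [ref]; split_ifs with h; exacts [(hd j).1, le_rfl])
  have hεpos : 0 < min dlo (min dmax (c / T)) :=
    lt_min hdlo (lt_min hdmax (div_pos hc hT))
  have hπ0 : 0 < π := lt_of_lt_of_le one_pos hπ
  have hdiv : 0 < offOpt c dmax (ref dlo d t) / π := div_pos (lt_of_lt_of_le hεpos hσ) hπ0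
  have hpos : 0 < d t - prefMax d t + offOpt c dmax (ref dlo d t) / π := by linarith
  exact lt_max_iff.2 (Or.inl hpos)

lemma pcr_le_dhi [NeZero T] {c dmax dlo dhi π : ℝ} (hc : 0 < c) (hdmax : 0 < dmax)
    (hdlo : 0 < dlo) (hbd : dlo ≤ dhi) (hπ : 1 ≤ π) {d : Fin T → ℝ} (hd : inD dlo dhi d)
    (t : Fin T) : pcr c dmax dlo π d t ≤ dhi := by
  have hrn : ∀ j, (0:ℝ) ≤ ref dlo d t j := fun j => le_trans hdlo.le (ref_mem hbd hd t j).1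
  have hσ0 : 0 ≤ offOpt c dmax (ref dlo d t) := offOpt_nonneg hc.le hdmax.le hrn
  have hσhi : offOpt c dmax (ref dlo d t) ≤ dhi :=
    le_trans (offOpt_le_sup hc.le hdmax.le hrn) (fin_sup_le fun j => (ref_mem hbd hd t j).2)
  have hdiv : offOpt c dmax (ref dlo d t) / π ≤ offOpt c dmax (ref dlo d t) :=
    div_le_self hσ0 hπ
  have h1 : d t ≤ prefMax d t := le_prefMax d le_rfl
  exact max_le (by linarith) (le_trans hdlo.le hbd)

/-- Swap transform: moving a later positive slot onto an earlier zero slot of an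
optimal profile keeps it optimal and extends the initial positive run. -/
lemma swap_step [NeZero T] {c dmax dlo dhi π : ℝ} (hc : 0 < c) (hdmax : 0 < dmax)
    (hdlo : 0 < dlo) (hbd : dlo ≤ dhi) (hπ : 1 ≤ π)
    {d : Fin T → ℝ} (hd : inD dlo dhi d)
    (hsum : ∑ t, pcr c dmax dlo π d t = c)
    (hub : ∀ e : Fin T → ℝ, inD dlo dhi e → ∑ t, pcr c dmax dlo π e t ≤ c)
    {n q : Fin T} (hnq : n < q) (hn : pcr c dmax dlo π d n = 0)
    (hq : 0 < pcr c dmax dlo π d q)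
    (hmid : ∀ t, n < t → t < q → pcr c dmax dlo π d t = 0) :
    ∃ e : Fin T → ℝ, inD dlo dhi e ∧ (∑ t, pcr c dmax dlo π e t = c) ∧
      (∀ t, t < n → pcr c dmax dlo π e t = pcr c dmax dlo π d t) ∧
      0 < pcr c dmax dlo π e n := by
  classical
  set e : Fin T → ℝ := fun j => d (Equiv.swap n q j) with hedef
  have hde : inD dlo dhi e := fun t => hd _
  have hen : e n = d q := by simp [hedef, Equiv.swap_apply_left]
  have heq2 : e q = d n := by simp [hedef, Equiv.swap_apply_right]
  have heo : ∀ j, j ≠ n → j ≠ q → e j = d j := fun j h1 h2 => by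
    simp [hedef, Equiv.swap_apply_of_ne_of_ne h1 h2]
  have hπ0 : 0 < π := lt_of_lt_of_le one_pos hπ
  have ha : ∀ t, t < n → pcr c dmax dlo π e t = pcr c dmax dlo π d t := by
    intro t ht
    exact pcr_prefix_congr c dmax dlo π fun j hj =>
      heo j (ne_of_lt (lt_of_le_of_lt hj ht)) (ne_of_lt (lt_trans (lt_of_le_of_lt hj ht) hnq))
  have hrnn : ∀ (x : Fin T → ℝ), inD dlo dhi x → ∀ (t j : Fin T), (0:ℝ) ≤ ref dlo x t j :=
    fun x hx t j => le_trans hdlo.le (ref_mem hbd hx t j).1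
  have hprefb : prefMax e n ≤ prefMax d q := by
    refine prefMax_le fun j hj => ?_
    rcases eq_or_lt_of_le hj with rfl | hlt
    · rw [hen]; exact le_prefMax d le_rfl
    · rw [heo j (ne_of_lt hlt) (ne_of_lt (lt_trans hlt hnq))]
      exact le_prefMax d (le_of_lt (lt_trans hlt hnq))
  have hσb : offOpt c dmax (ref dlo d q) ≤ offOpt c dmax (ref dlo e n) := by
    have hle : ∀ j, ref dlo e n j ≤ ref dlo d q (Equiv.swap n q j) + 0 := by
      intro j; rw [add_zero]
      rcases lt_trichotomy j n with hlt | hj | hgt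
      · have h1 : Equiv.swap n q j = j :=
          Equiv.swap_apply_of_ne_of_ne (ne_of_lt hlt) (ne_of_lt (lt_trans hlt hnq))
        rw [h1]
        simp only [ref, if_pos (le_of_lt hlt), if_pos (le_of_lt (lt_trans hlt hnq))]
        rw [heo j (ne_of_lt hlt) (ne_of_lt (lt_trans hlt hnq))]
      · subst hj
        rw [Equiv.swap_apply_left]
        simp only [ref, if_pos (le_refl j), if_pos (le_refl q)]
        rw [hen]
      · have hnj : ¬ (j ≤ n) := not_le.2 hgt
        simp only [ref, if_neg hnj]
        exact (ref_mem hbd hd q (Equiv.swap n q j)).1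
    have hsup : (⨆ j, ref dlo d q j) ≤ (⨆ j, ref dlo e n j) + 0 := by
      rw [add_zero, sup_ref hd q]
      obtain ⟨j₀, hj₀, hEq⟩ := exists_prefMax_eq d q
      have hpos : 0 < pcr c dmax dlo π d j₀ := by
        refine pcr_pos_of_peak hc hdmax hdlo hπ hd ?_
        refine prefMax_le fun k hk => ?_
        calc d k ≤ prefMax d q := le_prefMax d (le_trans hk hj₀)
          _ = d j₀ := hEq
      have hcases : j₀ < n ∨ j₀ = q := by
        rcases lt_trichotomy j₀ n with h | h | h
        · exact Or.inl h
        · exfalso; rw [h, hn] at hpos; exact lt_irrefl 0 hpos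
        · rcases eq_or_lt_of_le hj₀ with he2 | hlt2
          · exact Or.inr he2
          · exfalso; rw [hmid j₀ h hlt2] at hpos; exact lt_irrefl 0 hpos
      rcases hcases with h | h
      · rw [hEq]
        have h2 : ref dlo e n j₀ = d j₀ := by
          simp only [ref, if_pos (le_of_lt h)]
          exact heo j₀ (ne_of_lt h) (ne_of_lt (lt_trans h hnq))
        rw [← h2]; exact le_fin_sup _ j₀
      · rw [hEq, h]
        have h2 : ref dlo e n n = d q := by
          simp only [ref, if_pos (le_refl n)]; exact hen
        rw [← h2]; exact le_fin_sup _ n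
    have happ := offOpt_le_offOpt (c := c) (dmax := dmax) hc.le hdmax.le
      (hrnn d hd q) (hrnn e hde n) (Equiv.swap n q) le_rfl hle hsup
    simpa using happ
  have hbn : pcr c dmax dlo π d q ≤ pcr c dmax dlo π e n := by
    have hdiv : offOpt c dmax (ref dlo d q) / π ≤ offOpt c dmax (ref dlo e n) / π := by
      rw [div_eq_mul_inv, div_eq_mul_inv]
      exact mul_le_mul_of_nonneg_right hσb (inv_nonneg.2 hπ0.le)
    simp only [pcr]
    apply max_le_max _ le_rfl
    rw [hen]; linarith
  have hc2 : ∀ t, q < t → pcr c dmax dlo π d t ≤ pcr c dmax dlo π e t := by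
    intro t ht
    have hnt : n ≤ t := le_of_lt (lt_trans hnq ht)
    have hqt : q ≤ t := le_of_lt ht
    have htn : t ≠ n := ne_of_gt (lt_trans hnq ht)
    have htq : t ≠ q := ne_of_gt ht
    have hpref : prefMax e t = prefMax d t := by
      apply le_antisymm
      · refine prefMax_le fun j hj => ?_
        by_cases h1 : j = n
        · subst h1; rw [hen]; exact le_prefMax d hqt
        by_cases h2 : j = q
        · subst h2; rw [heq2]; exact le_prefMax d hnt
        · rw [heo j h1 h2]; exact le_prefMax d hj
      · refine prefMax_le fun j hj => ?_
        by_cases h1 : j = n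
        · subst h1; rw [← heq2]; exact le_prefMax e hqt
        by_cases h2 : j = q
        · subst h2; rw [← hen]; exact le_prefMax e hnt
        · rw [← heo j h1 h2]; exact le_prefMax e hj
    have hpoint : ∀ j, ref dlo d t j = ref dlo e t (Equiv.swap n q j) := by
      intro j
      by_cases h1 : j = n
      · subst h1
        rw [Equiv.swap_apply_left]
        simp only [ref, if_pos hnt, if_pos hqt]
        exact heq2.symm
      by_cases h2 : j = q
      · subst h2
        rw [Equiv.swap_apply_right]
        simp only [ref, if_pos hqt, if_pos hnt]
        exact hen.symm
      · rw [Equiv.swap_apply_of_ne_of_ne h1 h2]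
        simp only [ref]; split_ifs with h3
        · exact (heo j h1 h2).symm
        · rfl
    have hσc : offOpt c dmax (ref dlo d t) ≤ offOpt c dmax (ref dlo e t) := by
      have hle : ∀ j, ref dlo e t j ≤ ref dlo d t (Equiv.swap n q j) + 0 := by
        intro j; rw [add_zero]
        have h3 := hpoint (Equiv.swap n q j)
        rw [Equiv.swap_apply_self] at h3
        exact le_of_eq h3.symm
      have hsup : (⨆ j, ref dlo d t j) ≤ (⨆ j, ref dlo e t j) + 0 := by
        rw [add_zero]
        refine fin_sup_le fun j => ?_
        rw [hpoint j]; exact le_fin_sup _ _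
      have happ := offOpt_le_offOpt (c := c) (dmax := dmax) hc.le hdmax.le
        (hrnn d hd t) (hrnn e hde t) (Equiv.swap n q) le_rfl hle hsup
      simpa using happ
    have het : e t = d t := heo t htn htq
    have hdiv : offOpt c dmax (ref dlo d t) / π ≤ offOpt c dmax (ref dlo e t) / π := by
      rw [div_eq_mul_inv, div_eq_mul_inv]
      exact mul_le_mul_of_nonneg_right hσc (inv_nonneg.2 hπ0.le)
    simp only [pcr]
    apply max_le_max _ le_rfl
    rw [het, hpref]; linarith
  have hψ : ∑ t, pcr c dmax dlo π d (Equiv.swap n q t) = c := by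
    rw [Equiv.sum_comp (Equiv.swap n q) (pcr c dmax dlo π d)]; exact hsum
  have hsum2 : c ≤ ∑ t, pcr c dmax dlo π e t := by
    rw [eq_comm] at hψ
    refine le_of_le_of_eq (le_of_eq rfl) hψ |>.trans ?_
    refine Finset.sum_le_sum fun t _ => ?_
    rcases lt_trichotomy t n with h | h | h
    · rw [Equiv.swap_apply_of_ne_of_ne (ne_of_lt h) (ne_of_lt (lt_trans h hnq))]
      exact le_of_eq (ha t h).symm
    · subst h; rw [Equiv.swap_apply_left]; exact hbn
    · rcases lt_trichotomy t q with h2 | h2 | h2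
      · rw [Equiv.swap_apply_of_ne_of_ne (ne_of_gt h) (ne_of_lt h2), hmid t h h2]
        exact pcr_nonneg _ _ _ _ _ _
      · subst h2; rw [Equiv.swap_apply_right, hn]; exact pcr_nonneg _ _ _ _ _ _
      · rw [Equiv.swap_apply_of_ne_of_ne (ne_of_gt h) (ne_of_gt h2)]
        exact hc2 t h2
  have hfinal : ∑ t, pcr c dmax dlo π e t = c := le_antisymm (hub e hde) hsum2
  exact ⟨e, hde, hfinal, ha, lt_of_lt_of_le hq hbn⟩

lemma prefMax_sub_le [NeZero T] (d e : Fin T → ℝ) (t : Fin T) :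
    prefMax d t - prefMax e t ≤ dist d e := by
  obtain ⟨j, hj, hEq⟩ := exists_prefMax_eq d t
  have h1 : d j - e j ≤ dist d e := by
    have h := dist_le_pi_dist d e j
    rw [Real.dist_eq] at h
    linarith [le_abs_self (d j - e j)]
  have h2 : e j ≤ prefMax e t := le_prefMax e hj
  linarith [hEq.le, hEq.ge]

lemma prefMax_continuous [NeZero T] (t : Fin T) :
    Continuous fun d : Fin T → ℝ => prefMax d t := by
  have h : LipschitzWith 1 fun d : Fin T → ℝ => prefMax d t := by
    apply LipschitzWith.of_dist_le_mul
    intro d e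
    rw [NNReal.coe_one, one_mul, Real.dist_eq, abs_sub_le_iff]
    exact ⟨prefMax_sub_le d e t, by rw [dist_comm]; exact prefMax_sub_le e d t⟩
  exact h.continuous

lemma refF_contOn [NeZero T] {c dmax dlo dhi : ℝ} (hc : 0 < c) (hdmax : 0 < dmax)
    (hdlo : 0 < dlo) (hbd : dlo ≤ dhi) (t : Fin T) :
    ContinuousOn (fun d : Fin T → ℝ => offOpt c dmax (ref dlo d t))
      {d : Fin T → ℝ | inD dlo dhi d} := by
  have hpt : ∀ (x y : Fin T → ℝ) (j : Fin T), ref dlo x t j ≤ ref dlo y t j + dist x y := by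
    intro x y j
    simp only [ref]; split_ifs
    · have h := dist_le_pi_dist x y j
      rw [Real.dist_eq] at h
      linarith [le_abs_self (x j - y j)]
    · linarith [dist_nonneg (x := x) (y := y)]
  have key : ∀ (x y : Fin T → ℝ), inD dlo dhi x → inD dlo dhi y →
      offOpt c dmax (ref dlo x t) ≤ offOpt c dmax (ref dlo y t) + 2 * dist x y := by
    intro x y hx hy
    refine offOpt_le_offOpt hc.le hdmax.le
      (fun j => le_trans hdlo.le (ref_mem hbd hx t j).1)
      (fun j => le_trans hdlo.le (ref_mem hbd hy t j).1)
      (Equiv.refl _) dist_nonneg ?_ ?_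
    · intro j
      simp only [Equiv.refl_apply]
      have h3 := hpt y x j
      rwa [dist_comm y x] at h3
    · refine fin_sup_le fun j => ?_
      exact le_trans (hpt x y j) (by linarith [le_fin_sup (fun j => ref dlo y t j) j])
  rw [Metric.continuousOn_iff]
  intro d hd ε hε
  refine ⟨ε / 3, by positivity, fun e he hdist => ?_⟩
  have h1 := key e d he hd
  have h2 := key d e hd he
  rw [dist_comm d e] at h2
  rw [Real.dist_eq, abs_sub_lt_iff]
  constructor <;> linarith

lemma pcr_contOn [NeZero T] {c dmax dlo dhi : ℝ} (π : ℝ) (hc : 0 < c) (hdmax : 0 < dmax)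
    (hdlo : 0 < dlo) (hbd : dlo ≤ dhi) :
    ContinuousOn (fun d : Fin T → ℝ => ∑ t, pcr c dmax dlo π d t)
      {d : Fin T → ℝ | inD dlo dhi d} := by
  apply continuousOn_finset_sum
  intro t _
  simp only [pcr]
  have hF : ContinuousOn
      (fun d : Fin T → ℝ => d t - prefMax d t + offOpt c dmax (ref dlo d t) / π)
      {d : Fin T → ℝ | inD dlo dhi d} :=
    ContinuousOn.add
      (((continuous_apply t).continuousOn).sub (prefMax_continuous t).continuousOn)
      ((refF_contOn (dhi := dhi) hc hdmax hdlo hbd t).div_const π)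
  exact (continuous_id.max continuous_const).comp_continuousOn hF

end Aux15

/-- if `Φ(π*) = c`, there is a worst-case input on which `pCR-PRM(π*)`
discharges strictly positive amounts on an initial block of slots, exhausting the
capacity, and nothing afterwards. -/
theorem stmt15 (T : ℕ) (hT : 0 < T) (c dmax dlo dhi : ℝ)
    (hc : 0 < c) (hdmax : 0 < dmax) (hdlo : 0 < dlo) (hbd : dlo ≤ dhi)
    (π : ℝ) (hπ : 1 ≤ π) (hΦ : Phi T c dmax dlo dhi π = c) :
    ∃ d : Fin T → ℝ, inD dlo dhi d ∧ ∃ k : Fin T,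
      (∑ t, pcr c dmax dlo π d t) = c ∧
      (∀ t, t ≤ k → 0 < pcr c dmax dlo π d t) ∧
      (∀ t, k < t → pcr c dmax dlo π d t = 0) := by
  haveI : NeZero T := ⟨hT.ne'⟩
  classical
  -- compactness and attainment of the supremum
  have hKeq : {d : Fin T → ℝ | inD dlo dhi d} =
      Set.Icc (fun _ => dlo) (fun _ => dhi) := by
    ext d
    simp only [Set.mem_setOf_eq, Set.mem_Icc, inD, Pi.le_def]
    constructor
    · intro h; exact ⟨fun t => (h t).1, fun t => (h t).2⟩
    · intro h t; exact ⟨h.1 t, h.2 t⟩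
  have hKcomp : IsCompact {d : Fin T → ℝ | inD dlo dhi d} := by
    rw [hKeq]; exact isCompact_Icc
  have hKne : ({d : Fin T → ℝ | inD dlo dhi d}).Nonempty :=
    ⟨fun _ => dlo, fun t => ⟨le_rfl, hbd⟩⟩
  obtain ⟨dstar, hdstarK, hmax⟩ :=
    hKcomp.exists_isMaxOn hKne (Aux15.pcr_contOn π hc hdmax hdlo hbd)
  have hdstarD : inD dlo dhi dstar := hdstarK
  have hSne : Set.Nonempty
      {s | ∃ d : Fin T → ℝ, inD dlo dhi d ∧ s = ∑ t, pcr c dmax dlo π d t} :=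
    ⟨∑ t, pcr c dmax dlo π (fun _ => dlo) t, ⟨fun _ => dlo, fun t => ⟨le_rfl, hbd⟩, rfl⟩⟩
  have hSbdd : BddAbove
      {s | ∃ d : Fin T → ℝ, inD dlo dhi d ∧ s = ∑ t, pcr c dmax dlo π d t} := by
    refine ⟨T * dhi, ?_⟩
    rintro s ⟨d, hd, rfl⟩
    calc ∑ t, pcr c dmax dlo π d t ≤ ∑ _t : Fin T, dhi :=
          Finset.sum_le_sum fun t _ => Aux15.pcr_le_dhi hc hdmax hdlo hbd hπ hd t
      _ = T * dhi := by rw [Finset.sum_const, Finset.card_univ, Fintype.card_fin, nsmul_eq_mul]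
  have hub : ∀ d : Fin T → ℝ, inD dlo dhi d → ∑ t, pcr c dmax dlo π d t ≤ c := by
    intro d hd
    calc ∑ t, pcr c dmax dlo π d t
        ≤ sSup {s | ∃ d : Fin T → ℝ, inD dlo dhi d ∧ s = ∑ t, pcr c dmax dlo π d t} :=
          le_csSup hSbdd ⟨d, hd, rfl⟩
      _ = c := hΦ
  have hsum_star : ∑ t, pcr c dmax dlo π dstar t = c := by
    refine le_antisymm (hub dstar hdstarD) ?_
    have h3 : sSup {s | ∃ d : Fin T → ℝ, inD dlo dhi d ∧ s = ∑ t, pcr c dmax dlo π d t}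
        ≤ ∑ t, pcr c dmax dlo π dstar t := by
      refine csSup_le hSne ?_
      rintro s ⟨d, hd, rfl⟩
      exact hmax hd
    calc c = Phi T c dmax dlo dhi π := hΦ.symm
      _ ≤ ∑ t, pcr c dmax dlo π dstar t := h3
  -- slot 0 is always strictly positive
  have hslot0 : ∀ d : Fin T → ℝ, inD dlo dhi d → 0 < pcr c dmax dlo π d ⟨0, hT⟩ := by
    intro d hd
    refine Aux15.pcr_pos_of_peak hc hdmax hdlo hπ hd ?_
    refine Aux15.prefMax_le fun j hj => ?_
    have h0 : (j : ℕ) ≤ 0 := hj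
    have hj0 : j = ⟨0, hT⟩ := by
      apply Fin.ext
      simpa using Nat.le_zero.mp h0
    rw [hj0]
  -- induction on the length of the initial strictly positive run
  suffices h : ∀ n : ℕ, n ≤ T →
      (∃ d : Fin T → ℝ, inD dlo dhi d ∧ ∃ k : Fin T, (∑ t, pcr c dmax dlo π d t) = c ∧
        (∀ t, t ≤ k → 0 < pcr c dmax dlo π d t) ∧ (∀ t, k < t → pcr c dmax dlo π d t = 0)) ∨
      (∃ d : Fin T → ℝ, inD dlo dhi d ∧ (∑ t, pcr c dmax dlo π d t) = c ∧
        ∀ t : Fin T, (t : ℕ) < n → 0 < pcr c dmax dlo π d t) by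
    rcases h T le_rfl with hgoal | ⟨d, hd, hdsum, hrun⟩
    · exact hgoal
    · refine ⟨d, hd, ⟨T - 1, by omega⟩, hdsum, fun t _ => hrun t t.2, fun t ht => ?_⟩
      exfalso
      have h1 : (t : ℕ) < T := t.2
      have h2 : (T - 1 : ℕ) < (t : ℕ) := ht
      omega
  intro n
  induction n with
  | zero =>
    intro _
    right
    exact ⟨dstar, hdstarD, hsum_star, fun t ht => absurd ht (Nat.not_lt_zero _)⟩
  | succ n ih =>
    intro hn1
    rcases ih (Nat.le_of_succ_le hn1) with hgoal | ⟨d, hdK, hdsum, hrun⟩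
    · exact Or.inl hgoal
    · have hnT : n < T := Nat.lt_of_succ_le hn1
      by_cases hpos : 0 < pcr c dmax dlo π d ⟨n, hnT⟩
      · right
        refine ⟨d, hdK, hdsum, fun t ht => ?_⟩
        rcases Nat.lt_succ_iff_lt_or_eq.1 ht with h | h
        · exact hrun t h
        · have ht2 : t = ⟨n, hnT⟩ := Fin.ext h
          rw [ht2]; exact hpos
      · have hzero : pcr c dmax dlo π d ⟨n, hnT⟩ = 0 :=
          le_antisymm (not_lt.1 hpos) (Aux15.pcr_nonneg _ _ _ _ _ _)
        have hn0 : 0 < n := by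
          rcases Nat.eq_zero_or_pos n with h | h
          · exfalso
            apply hpos
            have ht2 : (⟨n, hnT⟩ : Fin T) = ⟨0, hT⟩ := Fin.ext h
            rw [ht2]
            exact hslot0 d hdK
          · exact h
        by_cases hex : ∃ q : Fin T, (⟨n, hnT⟩ : Fin T) < q ∧ 0 < pcr c dmax dlo π d q
        · obtain ⟨q0, hq01, hq02⟩ := hex
          have hQne : (Finset.univ.filter
              (fun q => (⟨n, hnT⟩ : Fin T) < q ∧ 0 < pcr c dmax dlo π d q)).Nonempty :=
            ⟨q0, by simp [hq01, hq02]⟩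
          obtain ⟨q, hqmem, hqmin⟩ := Finset.exists_min_image _ id hQne
          rw [Finset.mem_filter] at hqmem
          have hq1 : (⟨n, hnT⟩ : Fin T) < q := hqmem.2.1
          have hq2 : 0 < pcr c dmax dlo π d q := hqmem.2.2
          have hmid : ∀ t, (⟨n, hnT⟩ : Fin T) < t → t < q → pcr c dmax dlo π d t = 0 := by
            intro t h1 h2
            by_contra h0
            have hpos2 : 0 < pcr c dmax dlo π d t :=
              lt_of_le_of_ne (Aux15.pcr_nonneg _ _ _ _ _ _) (Ne.symm h0)
            have hle2 : q ≤ t := by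
              have := hqmin t (by simp [h1, hpos2])
              simpa using this
            exact absurd h2 (not_lt.2 hle2)
          obtain ⟨e, heK, hesum, hepre, hepos⟩ :=
            Aux15.swap_step hc hdmax hdlo hbd hπ hdK hdsum hub hq1 hzero hq2 hmid
          right
          refine ⟨e, heK, hesum, fun t ht => ?_⟩
          rcases Nat.lt_succ_iff_lt_or_eq.1 ht with h | h
          · have htlt : t < (⟨n, hnT⟩ : Fin T) := h
            rw [hepre t htlt]
            exact hrun t h
          · have ht2 : t = ⟨n, hnT⟩ := Fin.ext h
            rw [ht2]; exact hepos
        · left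
          push_neg at hex
          have hzero' : ∀ t : Fin T, n ≤ (t : ℕ) → pcr c dmax dlo π d t = 0 := by
            intro t ht
            rcases Nat.eq_or_lt_of_le ht with h | h
            · have ht2 : t = ⟨n, hnT⟩ := Fin.ext h.symm
              rw [ht2]; exact hzero
            · have hlt : (⟨n, hnT⟩ : Fin T) < t := h
              exact le_antisymm (hex t hlt) (Aux15.pcr_nonneg _ _ _ _ _ _)
          refine ⟨d, hdK, ⟨n - 1, by omega⟩, hdsum, fun t ht => ?_, fun t ht => ?_⟩
          · refine hrun t ?_
            have h0 : (t : ℕ) ≤ n - 1 := ht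
            omega
          · refine hzero' t ?_
            have h0 : (n - 1 : ℕ) < (t : ℕ) := ht
            omega
end
end
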